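/- For each r ≥ 0, the S-module Ω^r_d = ⊕_{b≥n_r} Ω^r(b) (for any n_r > n), with the deformed action f·_d τ := (b/(b+c))·(fτ + (1/b)·df∧i_Rτ) for homogeneous f ∈ S(c), τ ∈ Ω^r(b), is finitely generated: it is generated over S by its homogeneous component of degree n_r. -/

import Mathlib

/-!
Common setup: a concrete model of the exterior algebra `Ω` of differential forms over
`S = ℂ[x₁,…,xₙ]`.  An element of `Ω` is encoded as a function assigning to each subset
`I ⊆ {1,…,n}` the polynomial coefficient of `dx_I = dx_{i₁} ∧ … ∧ dx_{i_r}` (indices in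
increasing order).  The `r`-forms are the elements supported on subsets of cardinality `r`.
-/

open MvPolynomial

noncomputable section

/-- The polynomial ring `S = ℂ[x₁,…,xₙ]`. -/
abbrev S (n : ℕ) : Type := MvPolynomial (Fin n) ℂ

/-- The exterior algebra of differential forms over `S`: a form is given by its coefficient
at each basis monomial `dx_I`, `I ⊆ {1,…,n}`. -/
abbrev Ω (n : ℕ) : Type := Finset (Fin n) → S n

variable {n : ℕ}

/-- The sign `(-1)^{#{(i,j) ∈ I × J : j < i}}` arising when reordering `dx_I ∧ dx_J`. -/
def sgnMerge (I J : Finset (Fin n)) : ℤ :=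
  (-1) ^ (∑ i ∈ I, (J.filter (fun j => j < i)).card)

/-- Exterior (wedge) product of forms. -/
def wedge (μ τ : Ω n) : Ω n :=
  fun K => ∑ I ∈ K.powerset, (sgnMerge I (K \ I) : S n) * μ I * τ (K \ I)

/-- Contraction `i_X` with a vector field `X = Σ_k X_k ∂/∂x_k` (given by its components). -/
def contr (X : Fin n → S n) (τ : Ω n) : Ω n :=
  fun J => ∑ k ∈ Jᶜ, ((-1 : S n) ^ (J.filter (fun j => j < k)).card) * X k * τ (insert k J)

/-- The exterior differential `d`. -/
def extd (τ : Ω n) : Ω n :=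
  fun I => ∑ k ∈ I, ((-1 : S n) ^ (I.filter (fun j => j < k)).card) * pderiv k (τ (I.erase k))

/-- The radial vector field `R = Σ_k x_k ∂/∂x_k`. -/
def radial (n : ℕ) : Fin n → S n := fun k => X k

/-- The unit `1 ∈ Ω⁰`. -/
def oneForm (n : ℕ) : Ω n := fun I => if I = ∅ then 1 else 0

/-- A polynomial regarded as a `0`-form. -/
def ofPoly (f : S n) : Ω n := fun I => if I = ∅ then f else 0

/-- The basic `1`-form `dx_k`. -/
def dx (k : Fin n) : Ω n := fun I => if I = {k} then 1 else 0

/-- `τ` is an `r`-form, i.e. `τ ∈ Ω^r`. -/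
def IsForm (τ : Ω n) (r : ℕ) : Prop := ∀ I : Finset (Fin n), I.card ≠ r → τ I = 0

/-- `τ ∈ Ω^z` for an integer `z` (so `τ = 0` when `z < 0`). -/
def IsFormZ (τ : Ω n) (z : ℤ) : Prop := ∀ I : Finset (Fin n), (I.card : ℤ) ≠ z → τ I = 0

/-- `τ ∈ Ω^r(b)`: an `r`-form, homogeneous of total degree `b`, where each `x_i` and each
`dx_i` has degree `1` (this is the grading by the Lie derivative along the radial field). -/
def IsHomogForm (τ : Ω n) (r b : ℕ) : Prop :=
  IsForm τ r ∧ ∀ (I : Finset (Fin n)) (m : Fin n →₀ ℕ),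
    coeff m (τ I) ≠ 0 → (∑ i ∈ m.support, m i) + I.card = b

/-- The coordinate vector field `∂/∂x_k`. -/
def coordVF (n : ℕ) (k : Fin n) : Fin n → S n := fun j => if j = k then 1 else 0

/-- Contraction `i_L` with a vector valued differential form `L ∈ Ω^{q+1} ⊗_S T`,
encoded by its components `L k ∈ Ω^{q+1}` with respect to the basis `∂/∂x_k` of `T`,
so `L = Σ_k (L k) ⊗ ∂/∂x_k` and `i_L τ = Σ_k (L k) ∧ i_{∂/∂x_k} τ`. -/
def vcontr (L : Fin n → Ω n) (τ : Ω n) : Ω n :=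
  ∑ k : Fin n, wedge (L k) (contr (coordVF n k) τ)

/-- The Lie derivative `L_K = [i_K, d] = i_K ∘ d + (-1)^q d ∘ i_K` with respect to a vector
valued form `K ∈ Ω^q ⊗_S T` (here `i_K` has degree `q - 1` and `d` has degree `1`). -/
def lieD (q : ℤ) (K : Fin n → Ω n) (τ : Ω n) : Ω n :=
  vcontr K (extd τ) + ((-1 : ℂ) ^ q) • extd (vcontr K τ)

/-- The identity vector valued `1`-form `Id = Σ_k dx_k ⊗ ∂/∂x_k ∈ Ω¹ ⊗_S T`. -/
def idVF (n : ℕ) : Fin n → Ω n := fun k => dx k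

/-- `D : Ω → Ω` is a (ℂ-linear) derivation of degree `q`. -/
structure IsDerivationOfDegree (D : Ω n → Ω n) (q : ℤ) : Prop where
  map_add : ∀ μ τ : Ω n, D (μ + τ) = D μ + D τ
  map_smul : ∀ (a : ℂ) (τ : Ω n), D (a • τ) = a • D τ
  map_degree : ∀ (r : ℕ) (τ : Ω n), IsForm τ r → IsFormZ (D τ) ((r : ℤ) + q)
  leibniz : ∀ (r : ℕ) (μ τ : Ω n), IsForm μ r →
    D (wedge μ τ) = wedge (D μ) τ + ((-1 : ℂ) ^ ((r : ℤ) * q)) • wedge μ (D τ)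

/-- `D : Ω → Ω` is a differential operator of order `1` and degree `q`, i.e. a ℂ-linear
map of degree `q` with `[[D, λ_μ], λ_τ] = 0` for all `μ, τ ∈ Ω` (stated on homogeneous
`μ ∈ Ω^r`, `τ ∈ Ω^s`, with the graded commutator signs). -/
structure IsDiffOpOfDegree (D : Ω n → Ω n) (q : ℤ) : Prop where
  map_add : ∀ μ τ : Ω n, D (μ + τ) = D μ + D τ
  map_smul : ∀ (a : ℂ) (τ : Ω n), D (a • τ) = a • D τ
  map_degree : ∀ (r : ℕ) (τ : Ω n), IsForm τ r → IsFormZ (D τ) ((r : ℤ) + q)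
  order_one : ∀ (r s : ℕ) (μ τ : Ω n), IsForm μ r → IsForm τ s → ∀ σ : Ω n,
    D (wedge μ (wedge τ σ)) - ((-1 : ℂ) ^ (q * (r : ℤ))) • wedge μ (D (wedge τ σ)) -
      ((-1 : ℂ) ^ ((q + (r : ℤ)) * (s : ℤ))) •
        (wedge τ (D (wedge μ σ)) - ((-1 : ℂ) ^ (q * (r : ℤ))) • wedge τ (wedge μ (D σ))) = 0

/-- The deformed action `f · τ = α(r,b,c)·fτ + β(r,b,c)·df ∧ i_R τ` of a homogeneous
polynomial `f ∈ S(c)` on `τ ∈ Ω^r(b)`, for given scalar families `α`, `β`. -/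
def defAct (α β : ℕ → ℕ → ℕ → ℂ) (r b c : ℕ) (f : S n) (τ : Ω n) : Ω n :=
  α r b c • (f • τ) + β r b c • wedge (extd (ofPoly f)) (contr (radial n) τ)

/-- The differential operator `ω̃₁ ∧ L_Id + ω̃₂ ∧ i_Id + λ_μ̃`, evaluated on `τ ∈ Ω^r`:
`τ ↦ ω̃₁ ∧ dτ + r · ω̃₂ ∧ τ + μ̃ ∧ τ`. -/
def opId (ω₁ ω₂ μ : Ω n) (r : ℕ) (τ : Ω n) : Ω n :=
  wedge ω₁ (extd τ) + (r : ℂ) • wedge ω₂ τ + wedge μ τ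

/-- The quantity `b - a·(r/q + (-1)^q t)`. -/
def denomA (q a : ℕ) (t : ℂ) (r b : ℕ) : ℂ :=
  (b : ℂ) - (a : ℂ) * ((r : ℂ) / (q : ℂ) + (-1 : ℂ) ^ q * t)

/-- `α(r,b,c) = (b - a(r/q + (-1)^q t)) / (b + c - a(r/q + (-1)^q t))`. -/
def alphaA (q a : ℕ) (t : ℂ) (r b c : ℕ) : ℂ :=
  denomA q a t r b / (denomA q a t r b + (c : ℂ))

/-- `β(r,b,c) = α(r,b,c) / (b - a(r/q + (-1)^q t))`. -/
def betaA (q a : ℕ) (t : ℂ) (r b c : ℕ) : ℂ :=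
  alphaA q a t r b c / denomA q a t r b

/-- A linearizable differential operator
`D = ω₁ ∧ L_Id + ((1/q)dω₁ + ω₂) ∧ i_Id + (t·λ_{dω₁} + λ_μ)`, evaluated on `τ ∈ Ω^r`. -/
def linOp (q : ℕ) (t : ℂ) (ω₁ ω₂ μ : Ω n) (r : ℕ) (τ : Ω n) : Ω n :=
  wedge ω₁ (extd τ) + (r : ℂ) • wedge ((q : ℂ)⁻¹ • extd ω₁ + ω₂) τ +
    wedge (t • extd ω₁ + μ) τ

/-- The deformed action linearizing the exterior differential:
`f ·_d τ = (b/(b+c))·(fτ + (1/b)·df ∧ i_R τ)`, with `f ·_d τ = fτ` when `b = 0`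
(in particular when `b = c = 0`). -/
def dotdT (b c : ℕ) (f : S n) (τ : Ω n) : Ω n :=
  if b = 0 then f • τ
  else ((b : ℂ) / ((b : ℂ) + (c : ℂ))) •
    (f • τ + ((b : ℂ))⁻¹ • wedge (extd (ofPoly f)) (contr (radial n) τ))

/-- The deformed action linearizing the exterior differential:
`f ·_d τ = (b/(b+c))·(fτ + (1/b)·df ∧ i_R τ)`, with the usual product when `b = c = 0`. -/
def dotd (b c : ℕ) (f : S n) (τ : Ω n) : Ω n :=
  if b = 0 ∧ c = 0 then f • τ
  else ((b : ℂ) / ((b : ℂ) + (c : ℂ))) •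
    (f • τ + ((b : ℂ))⁻¹ • wedge (extd (ofPoly f)) (contr (radial n) τ))

/-- `κ(r) = (r+1)/2`. -/
def kapC (r : ℕ) : ℂ := ((r : ℂ) + 1) / 2

/-- The differential operator `ω△ : Ω^r → Ω^{r+2}`, `ω△τ = ω ∧ dτ + κ(r)·dω ∧ τ`. -/
def triOp (ω : Ω n) (r : ℕ) (τ : Ω n) : Ω n :=
  wedge ω (extd τ) + kapC r • wedge (extd ω) τ

/-- The deformed action linearizing `ω△`:
`f ·_{ω△} τ = (1/(b+c-κ(r)a))·[(b-κ(r)a)·fτ + df ∧ i_R τ]`. -/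
def triAct (a r b c : ℕ) (f : S n) (τ : Ω n) : Ω n :=
  ((b : ℂ) + (c : ℂ) - kapC r * (a : ℂ))⁻¹ •
    (((b : ℂ) - kapC r * (a : ℂ)) • (f • τ) + wedge (extd (ofPoly f)) (contr (radial n) τ))

/-- The Lie derivative `L_X ω = i_X (dω) + d (i_X ω)` along a vector field `X`. -/
def lieVF (X : Fin n → S n) (ω : Ω n) : Ω n := contr X (extd ω) + extd (contr X ω)

end
noncomputable section Aux

open Finset MvPolynomial

variable {n : ℕ}

/-- coefficientwise partial derivative -/
def cD (i : Fin n) (τ : Ω n) : Ω n := fun I => pderiv i (τ I)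

lemma sign_C (c : ℕ) : ((-1 : S n) ^ c) = C ((-1 : ℂ) ^ c) := by
  rw [map_pow, map_neg, map_one]

lemma filter_erase_lt (K : Finset (Fin n)) (i : Fin n) :
    ((K.erase i).filter (fun j => j < i)) = K.filter (fun j => j < i) := by
  ext j
  simp only [mem_filter, mem_erase]
  exact ⟨fun h => ⟨h.1.2, h.2⟩, fun h => ⟨⟨ne_of_lt h.2, h.1⟩, h.2⟩⟩

lemma wedge_dx_apply (i : Fin n) (μ : Ω n) (K : Finset (Fin n)) :
    wedge (dx i) μ K =
      if i ∈ K then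
        ((-1 : S n) ^ ((K.erase i).filter (fun j => j < i)).card) * μ (K.erase i)
      else 0 := by
  unfold wedge dx sgnMerge
  rw [Finset.sum_congr rfl (g := fun I =>
      if I = {i} then ((((-1:ℤ) ^ (∑ x ∈ I, ((K \ I).filter (fun j => j < x)).card) : ℤ) : S n)) * μ (K \ I) else 0)
    (fun I _ => by split <;> simp_all)]
  rw [Finset.sum_ite_eq' K.powerset {i}]
  by_cases h : i ∈ K
  · rw [if_pos (by simpa [Finset.mem_powerset] using h), if_pos h]
    rw [Finset.sum_singleton, ← Finset.erase_eq]
    push_cast [sign_C]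
    ring
  · rw [if_neg (by simpa [Finset.mem_powerset] using h), if_neg h]

lemma contr_coord_apply (i : Fin n) (τ : Ω n) (J : Finset (Fin n)) :
    contr (coordVF n i) τ J =
      if i ∈ Jᶜ then ((-1 : S n) ^ (J.filter (fun j => j < i)).card) * τ (insert i J)
      else 0 := by
  unfold contr coordVF
  rw [Finset.sum_congr rfl (g := fun k =>
      if k = i then ((-1 : S n) ^ (J.filter (fun j => j < k)).card) * τ (insert k J) else 0)
    (fun k _ => by split <;> simp_all)]
  rw [Finset.sum_ite_eq' Jᶜ i]

lemma sum_wedge_dx_cD (μ : Ω n) : ∑ i : Fin n, wedge (dx i) (cD i μ) = extd μ := by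
  funext K
  rw [Finset.sum_apply]
  simp only [wedge_dx_apply, cD]
  rw [Finset.sum_ite_mem, Finset.univ_inter]
  unfold extd
  exact Finset.sum_congr rfl fun i hi => by rw [filter_erase_lt]

lemma sum_wedge_dx_contr_coord (τ : Ω n) (K : Finset (Fin n)) :
    (∑ i : Fin n, wedge (dx i) (contr (coordVF n i) τ)) K = K.card • τ K := by
  rw [Finset.sum_apply]
  have h : ∀ i ∈ Finset.univ (α := Fin n), wedge (dx i) (contr (coordVF n i) τ) K
      = if i ∈ K then τ K else 0 := by
    intro i _
    rw [wedge_dx_apply]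
    by_cases hi : i ∈ K
    · rw [if_pos hi, if_pos hi, contr_coord_apply,
        if_pos (Finset.mem_compl.2 (Finset.notMem_erase i K)),
        Finset.insert_erase hi, ← mul_assoc, ← pow_add]
      rw [Even.neg_one_pow ⟨_, rfl⟩, one_mul]
    · rw [if_neg hi, if_neg hi]
  rw [Finset.sum_congr rfl h, Finset.sum_ite_mem, Finset.univ_inter, Finset.sum_const]

lemma cD_contr_radial (i : Fin n) (τ : Ω n) :
    cD i (contr (radial n) τ) = contr (coordVF n i) τ + contr (radial n) (cD i τ) := by
  funext J
  simp only [cD, contr, Pi.add_apply, radial]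
  rw [map_sum, ← Finset.sum_add_distrib]
  refine Finset.sum_congr rfl fun k hk => ?_
  simp only [sign_C, mul_assoc, pderiv_C_mul, pderiv_mul, pderiv_X, Pi.single_apply, coordVF, pderiv_C, zero_mul]
  ring

lemma neg_one_pow_sq (a : ℕ) : (-1 : S n) ^ a * (-1 : S n) ^ a = 1 := by
  rw [← pow_add]; exact Even.neg_one_pow ⟨a, rfl⟩

lemma extd_ofPoly_X (i : Fin n) : extd (ofPoly (X i : S n)) = dx i := by
  funext I
  unfold extd ofPoly dx
  by_cases hI : I = {i}
  · subst hI
    rw [Finset.sum_singleton, if_pos rfl]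
    simp [Finset.filter_singleton]
  · rw [if_neg hI]
    refine Finset.sum_eq_zero fun k hk => ?_
    by_cases he : I.erase k = ∅
    · have hIk : I = {k} := by
        have := Finset.erase_eq_empty_iff I k |>.1 he
        rcases this with h | h
        · exact absurd (h ▸ hk) (Finset.notMem_empty k)
        · exact h
      have hki : k ≠ i := fun h => hI (by rw [hIk, h])
      rw [if_pos he, pderiv_X_of_ne (fun h => hki h.symm), mul_zero]
    · rw [if_neg he, map_zero, mul_zero]

lemma contr_radial_wedge_dx (i : Fin n) (σ : Ω n) :
    contr (radial n) (wedge (dx i) σ) = (X i : S n) • σ - wedge (dx i) (contr (radial n) σ) := by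
  funext J
  simp only [Pi.sub_apply, Pi.smul_apply, smul_eq_mul]
  by_cases hi : i ∈ J
  · have key : ∀ k ∈ Jᶜ, ((-1:S n) ^ (J.filter (fun j => j < k)).card) * X k * (wedge (dx i) σ (insert k J))
        = -(((-1:S n) ^ (((J.erase i).filter (fun j => j < i)).card)) *
            (((-1:S n) ^ (((J.erase i)).filter (fun j => j < k)).card) * X k * σ (insert k (J.erase i)))) := by
      intro k hk
      have hkJ : k ∉ J := Finset.mem_compl.1 hk
      have hki : k ≠ i := fun h => hkJ (h ▸ hi)
      have hkJe : k ∉ J.erase i := fun h => hkJ (Finset.mem_of_mem_erase h)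
      rw [wedge_dx_apply, if_pos (Finset.mem_insert_of_mem hi), Finset.erase_insert_of_ne hki]
      have hfe : (insert k (J.erase i)).filter (fun j => j < i)
          = if k < i then insert k ((J.erase i).filter (fun j => j < i)) else (J.erase i).filter (fun j => j < i) :=
        Finset.filter_insert _ _ _
      have hfa : J.filter (fun j => j < k)
          = if i < k then insert i ((J.erase i).filter (fun j => j < k)) else (J.erase i).filter (fun j => j < k) := by
        conv_lhs => rw [← Finset.insert_erase hi]
        exact Finset.filter_insert _ _ _
      rcases lt_or_gt_of_ne hki with hlt | hgt
      · rw [hfe, if_pos hlt, hfa, if_neg (lt_asymm hlt),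
          Finset.card_insert_of_notMem (fun h => hkJe (Finset.mem_of_mem_filter _ h)),
          pow_succ]
        ring
      · rw [hfe, if_neg (lt_asymm hgt), hfa, if_pos hgt,
          Finset.card_insert_of_notMem (fun h => Finset.notMem_erase i J (Finset.mem_of_mem_filter _ h)),
          pow_succ]
        ring
    have hL : contr (radial n) (wedge (dx i) σ) J
        = ∑ k ∈ Jᶜ, ((-1:S n) ^ (J.filter (fun j => j < k)).card) * X k * (wedge (dx i) σ (insert k J)) := rfl
    have hC : contr (radial n) σ (J.erase i)
        = ∑ k ∈ insert i Jᶜ, ((-1:S n) ^ (((J.erase i)).filter (fun j => j < k)).card) * X k * σ (insert k (J.erase i)) := by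
      rw [show contr (radial n) σ (J.erase i)
          = ∑ k ∈ (J.erase i)ᶜ, ((-1:S n) ^ (((J.erase i)).filter (fun j => j < k)).card) * X k * σ (insert k (J.erase i)) from rfl,
        Finset.compl_erase]
    rw [hL, Finset.sum_congr rfl key, Finset.sum_neg_distrib,
      wedge_dx_apply, if_pos hi, hC,
      Finset.sum_insert (by simp [hi]), Finset.insert_erase hi]
    rw [mul_add, ← mul_assoc, ← mul_assoc, neg_one_pow_sq, one_mul, Finset.mul_sum]
    ring
  · have key : ∀ k ∈ Jᶜ, ((-1:S n) ^ (J.filter (fun j => j < k)).card) * X k * (wedge (dx i) σ (insert k J))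
        = if k = i then X i * σ J else 0 := by
      intro k hk
      rw [wedge_dx_apply]
      by_cases hki : k = i
      · subst hki
        rw [if_pos rfl, if_pos (Finset.mem_insert_self k J), Finset.erase_insert hi]
        rw [show ((-1:S n) ^ (J.filter (fun j => j < k)).card) * X k * (((-1:S n) ^ (J.filter (fun j => j < k)).card) * σ J)
            = ((-1:S n) ^ (J.filter (fun j => j < k)).card * (-1:S n) ^ (J.filter (fun j => j < k)).card) * (X k * σ J) from by ring,
          neg_one_pow_sq, one_mul]
      · have hii : i ∉ insert k J := by
          simp only [Finset.mem_insert]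
          rintro (h | h)
          · exact hki h.symm
          · exact hi h
        rw [if_neg hii, if_neg hki, mul_zero]
    have hL : contr (radial n) (wedge (dx i) σ) J
        = ∑ k ∈ Jᶜ, ((-1:S n) ^ (J.filter (fun j => j < k)).card) * X k * (wedge (dx i) σ (insert k J)) := rfl
    rw [hL, Finset.sum_congr rfl key, Finset.sum_ite_eq' Jᶜ i, if_pos (Finset.mem_compl.2 hi),
      wedge_dx_apply, if_neg hi, sub_zero]

lemma contr_radial_contr_radial (τ : Ω n) :
    contr (radial n) (contr (radial n) τ) = 0 := by
  funext J
  rw [Pi.zero_apply]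
  have h1 : ∀ k ∈ Jᶜ, ((-1:S n) ^ (J.filter (fun j => j < k)).card) * X k * contr (radial n) τ (insert k J)
      = ∑ l ∈ Jᶜ.erase k, ((-1:S n) ^ (J.filter (fun j => j < k)).card) * X k *
          (((-1:S n) ^ ((insert k J).filter (fun j => j < l)).card) * X l * τ (insert l (insert k J))) := by
    intro k hk
    rw [show contr (radial n) τ (insert k J)
        = ∑ l ∈ (insert k J)ᶜ, ((-1:S n) ^ ((insert k J).filter (fun j => j < l)).card) * X l * τ (insert l (insert k J)) from rfl,
      Finset.compl_insert, Finset.mul_sum]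
  have hL : contr (radial n) (contr (radial n) τ) J
      = ∑ k ∈ Jᶜ, ((-1:S n) ^ (J.filter (fun j => j < k)).card) * X k * contr (radial n) τ (insert k J) := rfl
  rw [hL, Finset.sum_congr rfl h1, Finset.sum_sigma']
  show (∑ p ∈ Jᶜ.sigma (fun k => Jᶜ.erase k), ((-1:S n) ^ (J.filter (fun j => j < p.1)).card) * X p.1 *
          (((-1:S n) ^ ((insert p.1 J).filter (fun j => j < p.2)).card) * X p.2 * τ (insert p.2 (insert p.1 J)))) = 0
  refine Finset.sum_involution (fun p _ => ⟨p.2, p.1⟩) ?_ ?_ ?_ ?_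
  · rintro ⟨k, l⟩ hp
    rw [Finset.mem_sigma] at hp
    obtain ⟨hk, hl⟩ := hp
    have hlk : l ≠ k := Finset.ne_of_mem_erase hl
    have hlJ : l ∉ J := Finset.mem_compl.1 (Finset.mem_of_mem_erase hl)
    have hkJ : k ∉ J := Finset.mem_compl.1 hk
    have hins : insert l (insert k J) = insert k (insert l J) := Finset.insert_comm _ _ _
    have hbkl : (insert k J).filter (fun j => j < l)
        = if k < l then insert k (J.filter (fun j => j < l)) else J.filter (fun j => j < l) :=
      Finset.filter_insert _ _ _
    have hblk : (insert l J).filter (fun j => j < k)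
        = if l < k then insert l (J.filter (fun j => j < k)) else J.filter (fun j => j < k) :=
      Finset.filter_insert _ _ _
    rcases lt_or_gt_of_ne hlk with hlt | hgt
    · rw [hins, hbkl, if_neg (lt_asymm hlt), hblk, if_pos hlt,
        Finset.card_insert_of_notMem (fun h => hlJ (Finset.mem_of_mem_filter _ h)), pow_succ]
      ring
    · rw [hins, hbkl, if_pos hgt, hblk, if_neg (lt_asymm hgt),
        Finset.card_insert_of_notMem (fun h => hkJ (Finset.mem_of_mem_filter _ h)), pow_succ]
      ring
  · rintro ⟨k, l⟩ hp _
    rw [Finset.mem_sigma] at hp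
    intro h
    exact (Finset.ne_of_mem_erase hp.2) (congrArg Sigma.fst h)
  · rintro ⟨k, l⟩ hp
    rw [Finset.mem_sigma] at hp ⊢
    have hlk : l ≠ k := Finset.ne_of_mem_erase hp.2
    exact ⟨Finset.mem_of_mem_erase hp.2, Finset.mem_erase.2 ⟨fun h => hlk h.symm, hp.1⟩⟩
  · rintro ⟨k, l⟩ _
    rfl

lemma contr_sum {ι : Type*} (s : Finset ι) (Xv : Fin n → S n) (f : ι → Ω n) :
    contr Xv (∑ i ∈ s, f i) = ∑ i ∈ s, contr Xv (f i) := by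
  funext J
  simp only [contr, Finset.sum_apply, Finset.mul_sum]
  rw [Finset.sum_comm]

lemma contr_csmul (Xv : Fin n → S n) (z : ℂ) (τ : Ω n) :
    contr Xv (z • τ) = z • contr Xv τ := by
  funext J
  simp only [contr, Pi.smul_apply, smul_eq_C_mul, Finset.mul_sum]
  exact Finset.sum_congr rfl fun k _ => by ring

lemma wedge_csmul_right (μ : Ω n) (z : ℂ) (τ : Ω n) :
    wedge μ (z • τ) = z • wedge μ τ := by
  funext K
  simp only [wedge, Pi.smul_apply, smul_eq_C_mul, Finset.mul_sum]
  exact Finset.sum_congr rfl fun I _ => by ring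

lemma wedge_sub_right (μ σ τ : Ω n) : wedge μ (σ - τ) = wedge μ σ - wedge μ τ := by
  funext K
  simp only [wedge, Pi.sub_apply, mul_sub, Finset.sum_sub_distrib]

lemma extd_zero : extd (0 : Ω n) = 0 := by
  funext I
  simp [extd]

lemma degree_add' (a b : Fin n →₀ ℕ) :
    Finsupp.degree (a + b) = Finsupp.degree a + Finsupp.degree b := by
  simp [Finsupp.degree_eq_weight_one, map_add]

lemma degree_single' (k : Fin n) : Finsupp.degree (Finsupp.single k 1) = 1 := by
  exact Finsupp.degree_single k 1

lemma degree_sum_eq (m : Fin n →₀ ℕ) : (∑ i ∈ m.support, m i) = Finsupp.degree m := rfl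

lemma coeff_pderiv_ne {k : Fin n} {p : S n} {m : Fin n →₀ ℕ}
    (h : coeff m (pderiv k p) ≠ 0) : coeff (m + Finsupp.single k 1) p ≠ 0 := by
  classical
  have hp : pderiv k p = ∑ v ∈ p.support, monomial (v - Finsupp.single k 1) (coeff v p * v k) := by
    conv_lhs => rw [p.as_sum]
    rw [map_sum]
    exact Finset.sum_congr rfl fun v _ => pderiv_monomial
  rw [hp, coeff_sum] at h
  obtain ⟨v, hv, hne⟩ := Finset.exists_ne_zero_of_sum_ne_zero h
  rw [coeff_monomial] at hne
  by_cases heq : v - Finsupp.single k 1 = m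
  · rw [if_pos heq] at hne
    have hvk : v k ≠ 0 := fun h0 => hne (by rw [h0, Nat.cast_zero, mul_zero])
    have hle : Finsupp.single k 1 ≤ v := Finsupp.single_le_iff.2 (Nat.one_le_iff_ne_zero.2 hvk)
    have hmv : m + Finsupp.single k 1 = v := by rw [← heq, tsub_add_cancel_of_le hle]
    rw [hmv]
    exact fun h0 => hne (by rw [h0, zero_mul])
  · rw [if_neg heq] at hne
    exact absurd rfl hne

lemma coeff_pderiv_degree {k : Fin n} {p : S n} {m : Fin n →₀ ℕ}
    (h : coeff m (pderiv k p) ≠ 0) :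
    Finsupp.degree (m + Finsupp.single k 1) = Finsupp.degree m + 1 := by
  rw [degree_add', degree_single']

lemma isHomogForm_zero (r b : ℕ) : IsHomogForm (0 : Ω n) r b :=
  ⟨fun _ _ => rfl, fun I m h => absurd (by simp) h⟩

lemma isHomogForm_csmul (z : ℂ) {τ : Ω n} {r b : ℕ} (h : IsHomogForm τ r b) :
    IsHomogForm (z • τ) r b := by
  refine ⟨fun I hI => by rw [Pi.smul_apply, h.1 I hI, smul_zero], fun I m hm => ?_⟩
  rw [Pi.smul_apply, coeff_smul] at hm
  exact h.2 I m (fun h0 => hm (by rw [h0, smul_zero]))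

lemma isHomogForm_cD (i : Fin n) {τ : Ω n} {r b : ℕ} (h : IsHomogForm τ r (b + 1)) :
    IsHomogForm (cD i τ) r b := by
  refine ⟨fun I hI => by rw [show cD i τ I = pderiv i (τ I) from rfl, h.1 I hI, map_zero],
    fun I m hm => ?_⟩
  rw [show cD i τ I = pderiv i (τ I) from rfl] at hm
  have h1 := h.2 I _ (coeff_pderiv_ne hm)
  rw [degree_sum_eq, degree_add', degree_single'] at h1
  rw [degree_sum_eq]
  omega

lemma isHomogForm_extd {τ : Ω n} {r b : ℕ} (h : IsHomogForm τ r b) :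
    IsHomogForm (extd τ) (r + 1) b := by
  constructor
  · intro I hI
    refine Finset.sum_eq_zero fun k hk => ?_
    have hc : (I.erase k).card ≠ r := by
      rw [Finset.card_erase_of_mem hk]
      have := Finset.card_pos.2 ⟨k, hk⟩
      omega
    rw [h.1 _ hc, map_zero, mul_zero]
  · intro I m hm
    rw [show extd τ I = ∑ k ∈ I, ((-1:S n) ^ (I.filter (fun j => j < k)).card) * pderiv k (τ (I.erase k)) from rfl,
      coeff_sum] at hm
    obtain ⟨k, hk, hne⟩ := Finset.exists_ne_zero_of_sum_ne_zero hm
    rw [sign_C, coeff_C_mul] at hne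
    have hne2 : coeff m (pderiv k (τ (I.erase k))) ≠ 0 := fun h0 => hne (by rw [h0, mul_zero])
    have h1 := h.2 _ _ (coeff_pderiv_ne hne2)
    rw [degree_sum_eq, degree_add', degree_single', Finset.card_erase_of_mem hk] at h1
    rw [degree_sum_eq]
    have := Finset.card_pos.2 ⟨k, hk⟩
    omega

lemma isHomogForm_contr_radial {τ : Ω n} {r b : ℕ} (h : IsHomogForm τ (r + 1) b) :
    IsHomogForm (contr (radial n) τ) r b := by
  constructor
  · intro J hJ
    refine Finset.sum_eq_zero fun k hk => ?_
    have hkJ : k ∉ J := Finset.mem_compl.1 hk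
    have hc : (insert k J).card ≠ r + 1 := by
      rw [Finset.card_insert_of_notMem hkJ]
      omega
    rw [h.1 _ hc, mul_zero]
  · intro J m hm
    rw [show contr (radial n) τ J = ∑ k ∈ Jᶜ, ((-1:S n) ^ (J.filter (fun j => j < k)).card) * X k * τ (insert k J) from rfl,
      coeff_sum] at hm
    obtain ⟨k, hk, hne⟩ := Finset.exists_ne_zero_of_sum_ne_zero hm
    rw [mul_assoc, sign_C, coeff_C_mul] at hne
    have hne2 : coeff m (X k * τ (insert k J)) ≠ 0 := fun h0 => hne (by rw [h0, mul_zero])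
    rw [coeff_X_mul'] at hne2
    by_cases hks : k ∈ m.support
    · rw [if_pos hks] at hne2
      have h1 := h.2 _ _ hne2
      have hkJ : k ∉ J := Finset.mem_compl.1 hk
      rw [Finset.card_insert_of_notMem hkJ, degree_sum_eq] at h1
      have hle : Finsupp.single k 1 ≤ m :=
        Finsupp.single_le_iff.2 (Nat.one_le_iff_ne_zero.2 (Finsupp.mem_support_iff.1 hks))
      have hdm : Finsupp.degree m = Finsupp.degree (m - Finsupp.single k 1) + 1 := by
        conv_lhs => rw [← tsub_add_cancel_of_le hle]
        rw [degree_add', degree_single']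
      rw [degree_sum_eq, hdm]
      omega
    · rw [if_neg hks] at hne2
      exact absurd rfl hne2

lemma X_mul_pderiv_monomial (k : Fin n) (v : Fin n →₀ ℕ) (c : ℂ) :
    (X k : S n) * pderiv k (monomial v c) = monomial v (c * (v k : ℂ)) := by
  rw [pderiv_monomial]
  by_cases hk : v k = 0
  · rw [hk]
    simp
  · have hle : Finsupp.single k 1 ≤ v := Finsupp.single_le_iff.2 (Nat.one_le_iff_ne_zero.2 hk)
    rw [X, monomial_mul, one_mul, add_comm, tsub_add_cancel_of_le hle]

lemma euler_poly (d : ℕ) (p : S n) (hp : ∀ m : Fin n →₀ ℕ, coeff m p ≠ 0 → Finsupp.degree m = d) :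
    ∑ k : Fin n, (X k : S n) * pderiv k p = (d : ℂ) • p := by
  have key : ∀ v ∈ p.support,
      ∑ k : Fin n, (X k : S n) * pderiv k (monomial v (coeff v p)) = (d : ℂ) • monomial v (coeff v p) := by
    intro v hv
    have hdeg : Finsupp.degree v = d := hp v (MvPolynomial.mem_support_iff.1 hv)
    rw [Finset.sum_congr rfl fun k _ => X_mul_pderiv_monomial k v (coeff v p)]
    rw [← map_sum, smul_monomial]
    congr 1
    rw [← Finset.mul_sum]
    have hs : ∑ k : Fin n, ((v k : ℂ)) = (d : ℂ) := by
      rw [← Nat.cast_sum]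
      norm_cast
      rw [← hdeg]
      unfold Finsupp.degree
      exact (Finset.sum_subset (Finset.subset_univ _)
        (fun k _ hk => Finsupp.notMem_support_iff.1 hk)).symm
    rw [hs, mul_comm, smul_eq_mul]
  calc ∑ k : Fin n, (X k : S n) * pderiv k p
      = ∑ k : Fin n, (X k : S n) * pderiv k (∑ v ∈ p.support, monomial v (coeff v p)) := by
        rw [← p.as_sum]
    _ = ∑ v ∈ p.support, ∑ k : Fin n, (X k : S n) * pderiv k (monomial v (coeff v p)) := by
        simp_rw [map_sum, Finset.mul_sum]
        rw [Finset.sum_comm]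
    _ = ∑ v ∈ p.support, (d : ℂ) • monomial v (coeff v p) := Finset.sum_congr rfl key
    _ = (d : ℂ) • p := by rw [← Finset.smul_sum, ← p.as_sum]

lemma euler_form (r b : ℕ) (τ : Ω n) (hτ : IsHomogForm τ r b) :
    ∑ i : Fin n, (X i : S n) • cD i τ = ((b : ℂ) - (r : ℂ)) • τ := by
  funext I
  rw [Finset.sum_apply, Pi.smul_apply]
  simp only [Pi.smul_apply, smul_eq_mul, cD]
  by_cases h0 : τ I = 0
  · rw [h0, smul_zero]
    exact Finset.sum_eq_zero fun k _ => by simp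
  · have hc : I.card = r := by
      by_contra hc
      exact h0 (hτ.1 I hc)
    obtain ⟨m₀, hm₀⟩ := MvPolynomial.ne_zero_iff.1 h0
    have hrb : r ≤ b := by
      have := hτ.2 I m₀ hm₀
      omega
    have hdeg : ∀ m : Fin n →₀ ℕ, coeff m (τ I) ≠ 0 → Finsupp.degree m = b - r := by
      intro m hm
      have := hτ.2 I m hm
      rw [degree_sum_eq] at this
      omega
    rw [euler_poly (b - r) (τ I) hdeg]
    rw [show ((b : ℂ) - (r : ℂ)) = ((b - r : ℕ) : ℂ) from by
      rw [Nat.cast_sub hrb]]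

lemma sum_wedge_contr_isForm (τ : Ω n) (r : ℕ) (hτ : IsForm τ r) :
    ∑ i : Fin n, wedge (dx i) (contr (coordVF n i) τ) = (r : ℂ) • τ := by
  funext K
  rw [sum_wedge_dx_contr_coord, Pi.smul_apply]
  by_cases h0 : τ K = 0
  · rw [h0, smul_zero, smul_zero]
  · have hc : K.card = r := by
      by_contra hc
      exact h0 (hτ K hc)
    rw [hc, nsmul_eq_mul, smul_eq_C_mul, map_natCast]

lemma lemA' (τ : Ω n) (r : ℕ) (hτ : IsForm τ r) :
    ∑ i : Fin n, wedge (dx i) (contr (radial n) (cD i τ))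
      = extd (contr (radial n) τ) - (r : ℂ) • τ := by
  have h4 : ∀ i ∈ Finset.univ (α := Fin n), wedge (dx i) (contr (radial n) (cD i τ))
      = wedge (dx i) (cD i (contr (radial n) τ)) - wedge (dx i) (contr (coordVF n i) τ) := by
    intro i _
    have h2 : contr (radial n) (cD i τ) = cD i (contr (radial n) τ) - contr (coordVF n i) τ := by
      rw [cD_contr_radial]
      abel
    rw [h2, wedge_sub_right]
  rw [Finset.sum_congr rfl h4, Finset.sum_sub_distrib, sum_wedge_dx_cD,
    sum_wedge_contr_isForm τ r hτ]

lemma cartan (r b : ℕ) (τ : Ω n) (hτ : IsHomogForm τ r b) :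
    extd (contr (radial n) τ) = (b : ℂ) • τ - contr (radial n) (extd τ) := by
  have h1 : contr (radial n) (extd τ) = ∑ i : Fin n, contr (radial n) (wedge (dx i) (cD i τ)) := by
    conv_lhs => rw [← sum_wedge_dx_cD τ]
    rw [contr_sum]
  have h2 : contr (radial n) (extd τ)
      = ((b : ℂ) - (r : ℂ)) • τ - (extd (contr (radial n) τ) - (r : ℂ) • τ) := by
    rw [h1, Finset.sum_congr rfl fun i _ => contr_radial_wedge_dx i (cD i τ),
      Finset.sum_sub_distrib, euler_form r b τ hτ, lemA' τ r hτ.1]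
  rw [h2]
  module

lemma key_step (r b : ℕ) (hb : b ≠ 0) (hrb : r < b) (τ : Ω n) (hτ : IsHomogForm τ r (b + 1)) :
    ∑ i : Fin n, dotd b 1 (X i) ((((b : ℂ) + 1) - (r : ℂ))⁻¹ • cD i τ)
      = τ - (((b : ℂ) + 1) * (((b : ℂ) + 1) - (r : ℂ)))⁻¹ • contr (radial n) (extd τ) := by
  have hB0 : ((b : ℂ) + 1) ≠ 0 := Nat.cast_add_one_ne_zero b
  have hb0 : (b : ℂ) ≠ 0 := Nat.cast_ne_zero.2 hb
  have hBr : ((b : ℂ) + 1) - (r : ℂ) ≠ 0 := by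
    have : ((b : ℂ) + 1) - (r : ℂ) = ((b + 1 - r : ℕ) : ℂ) := by
      rw [Nat.cast_sub (by omega)]
      push_cast
      ring
    rw [this]
    exact Nat.cast_ne_zero.2 (by omega)
  have hdot : ∀ i ∈ Finset.univ (α := Fin n), dotd b 1 (X i) ((((b : ℂ) + 1) - (r : ℂ))⁻¹ • cD i τ)
      = ((b : ℂ) / ((b : ℂ) + 1)) • (((((b : ℂ) + 1) - (r : ℂ))⁻¹ • ((X i : S n) • cD i τ))
          + ((b : ℂ))⁻¹ • ((((b : ℂ) + 1) - (r : ℂ))⁻¹ • wedge (dx i) (contr (radial n) (cD i τ)))) := by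
    intro i _
    unfold dotd
    rw [if_neg (by simp [hb]), extd_ofPoly_X, Nat.cast_one]
    rw [contr_csmul, wedge_csmul_right]
    rw [smul_comm ((((b : ℂ) + 1) - (r : ℂ))⁻¹) (X i : S n) (cD i τ)]
  rw [Finset.sum_congr rfl hdot, ← Finset.smul_sum, Finset.sum_add_distrib,
    ← Finset.smul_sum, ← Finset.smul_sum, ← Finset.smul_sum]
  rw [euler_form r (b + 1) τ hτ, lemA' τ r hτ.1, cartan r (b + 1) τ hτ]
  push_cast
  match_scalars <;> field_simp <;> ring
lemma isHomogForm_contr_extd {τ : Ω n} {r b : ℕ} (h : IsHomogForm τ r b) :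
    IsHomogForm (contr (radial n) (extd τ)) r b :=
  isHomogForm_contr_radial (isHomogForm_extd h)

end Aux

/-- For each `r ≥ 0` and any `n_r > n`, the `S`-module
`Ω^r_d = ⊕_{b ≥ n_r} Ω^r(b)` with the deformed action
`f ·_d τ = (b/(b+c))·(fτ + (1/b)·df∧i_Rτ)` is generated over `S` by its homogeneous
component of degree `n_r`: every `τ ∈ Ω^r(b)` with `b ≥ n_r` belongs to any set
containing `Ω^r(n_r)` that is closed under addition, `ℂ`-scalar multiplication and the
deformed action of homogeneous polynomials. -/
theorem dotd_module_finitely_generated (n r nr : ℕ) (hnr : n < nr)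
    (b : ℕ) (hb : nr ≤ b) (τ : Ω n) (hτ : IsHomogForm τ r b) :
    ∀ P : Set (Ω n),
      (∀ σ : Ω n, IsHomogForm σ r nr → σ ∈ P) →
      (∀ σ₁ σ₂ : Ω n, σ₁ ∈ P → σ₂ ∈ P → σ₁ + σ₂ ∈ P) →
      (∀ (z : ℂ) (σ : Ω n), σ ∈ P → z • σ ∈ P) →
      (∀ (c b' : ℕ) (f : S n) (σ : Ω n), f.IsHomogeneous c → IsHomogForm σ r b' →
        nr ≤ b' → σ ∈ P → dotd b' c f σ ∈ P) →
      τ ∈ P := by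
  intro P hP0 hPadd hPsmul hPact
  have main : ∀ b, nr ≤ b → ∀ τ : Ω n, IsHomogForm τ r b → τ ∈ P := by
    intro b hb
    induction b, hb using Nat.le_induction with
    | base => exact fun τ hτ => hP0 τ hτ
    | succ b hnrb IH =>
      intro τ hτ
      by_cases hrn : n < r
      · have hτ0 : τ = 0 := by
          funext I
          refine hτ.1 I ?_
          have h1 : I.card ≤ n := by
            simpa using Finset.card_le_univ I
          omega
        rw [hτ0]
        exact hP0 0 (isHomogForm_zero r nr)
      · push_neg at hrn
        have hb0 : b ≠ 0 := by omega
        have hrb : r < b := by omega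
        have hB0 : ((b : ℂ) + 1) ≠ 0 := Nat.cast_add_one_ne_zero b
        have hBreq : ((b : ℂ) + 1) - (r : ℂ) = ((b + 1 - r : ℕ) : ℂ) := by
          rw [Nat.cast_sub (by omega)]
          push_cast
          ring
        have hBr : ((b : ℂ) + 1) - (r : ℂ) ≠ 0 := by
          rw [hBreq]
          exact Nat.cast_ne_zero.2 (by omega)
        have zeroP : (0 : Ω n) ∈ P := hP0 0 (isHomogForm_zero r nr)
        have sumP : ∀ f : Fin n → Ω n, (∀ i, f i ∈ P) → (∑ i, f i) ∈ P := fun f hf =>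
          Finset.sum_induction f (· ∈ P) (fun a c ha hc => hPadd a c ha hc) zeroP
            (fun i _ => hf i)
        have mem_step : ∀ σ : Ω n, IsHomogForm σ r (b + 1) →
            (∑ i : Fin n, dotd b 1 (X i) ((((b : ℂ) + 1) - (r : ℂ))⁻¹ • cD i σ)) ∈ P := by
          intro σ hσ
          refine sumP _ fun i => ?_
          have hσi : IsHomogForm ((((b : ℂ) + 1) - (r : ℂ))⁻¹ • cD i σ) r b :=
            isHomogForm_csmul _ (isHomogForm_cD i hσ)
          exact hPact 1 b (X i) _ (MvPolynomial.isHomogeneous_X ℂ i) hσi hnrb (IH _ hσi)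
        set χ : Ω n := contr (radial n) (extd τ) with hχdef
        have hχhom : IsHomogForm χ r (b + 1) := isHomogForm_contr_extd hτ
        have hχd : contr (radial n) (extd χ) = (((b + 1 : ℕ)) : ℂ) • χ := by
          have h0 : contr (radial n) χ = 0 := contr_radial_contr_radial _
          have hc := cartan r (b + 1) χ hχhom
          rw [h0, extd_zero] at hc
          exact (sub_eq_zero.1 hc.symm).symm
        have keyχ : ∑ i : Fin n, dotd b 1 (X i) ((((b : ℂ) + 1) - (r : ℂ))⁻¹ • cD i χ)
            = (1 - (((b : ℂ) + 1) - (r : ℂ))⁻¹) • χ := by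
          rw [key_step r b hb0 hrb χ hχhom, hχd]
          push_cast
          match_scalars
          field_simp
        have hBr1 : (1 - (((b : ℂ) + 1) - (r : ℂ))⁻¹) ≠ 0 := by
          rw [hBreq, sub_ne_zero]
          intro h
          have h2 : ((b + 1 - r : ℕ) : ℂ) = 1 := inv_eq_one.1 h.symm
          have h3 : b + 1 - r = 1 := Nat.cast_eq_one.1 h2
          omega
        have hχP : χ ∈ P := by
          have hmem := hPsmul (1 - (((b : ℂ) + 1) - (r : ℂ))⁻¹)⁻¹ _ (mem_step χ hχhom)
          rw [keyχ, smul_smul, inv_mul_cancel₀ hBr1, one_smul] at hmem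
          exact hmem
        have hτeq : τ = (∑ i : Fin n, dotd b 1 (X i) ((((b : ℂ) + 1) - (r : ℂ))⁻¹ • cD i τ))
            + (((b : ℂ) + 1) * (((b : ℂ) + 1) - (r : ℂ)))⁻¹ • χ := by
          rw [key_step r b hb0 hrb τ hτ]
          abel
        rw [hτeq]
        exact hPadd _ _ (mem_step τ hτ) (hPsmul _ _ hχP)
  exact main b hb τ hτ
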